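/- For 0 < h < t < 1 with a = t/h, b = (1-t)/h, and every nonnegative integer k: ∑_{n=0}^∞ (-1)^n B_k^n(t;h) = (-1)^k ∫_0^1 x^{a+k-1}(1-x)^{b-1}/((2-x)^{k+1} B(a,b)) dx. -/

import Mathlib

/-- The h-Bernstein polynomial (Pólya–Eggenberger probability mass function). -/
noncomputable def hBernstein (n k : ℕ) (t h : ℝ) : ℝ :=
  (n.choose k : ℝ) *
    ((∏ i ∈ Finset.range k, (t + i * h)) * ∏ i ∈ Finset.range (n - k), (1 - t + i * h)) /
    ∏ i ∈ Finset.range n, (1 + i * h)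

section Aux
open MeasureTheory Set Real

open MeasureTheory Set Real

noncomputable def rBeta (p q : ℝ) : ℝ := ∫ x in (0:ℝ)..1, x ^ (p-1) * (1-x) ^ (q-1)

lemma cpow_eq_real {p : ℝ} (x : ℝ) (hx : 0 ≤ x) :
    (x:ℂ) ^ ((p:ℂ) - 1) = ((x ^ (p-1) : ℝ) : ℂ) := by
  rw [show ((p:ℂ) - 1) = ((p - 1 : ℝ) : ℂ) by push_cast; ring, Complex.ofReal_cpow hx]

lemma rBeta_integrableOn {p q : ℝ} (hp : 0 < p) (hq : 0 < q) :
    IntegrableOn (fun x : ℝ => x ^ (p-1) * (1-x) ^ (q-1)) (Ioo 0 1) := by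
  have h := Complex.betaIntegral_convergent (u := (p:ℂ)) (v := (q:ℂ)) (by simpa) (by simpa)
  rw [intervalIntegrable_iff_integrableOn_Ioc_of_le zero_le_one] at h
  have h2 : IntegrableOn (fun x : ℝ =>
      (((x ^ (p-1) * (1-x) ^ (q-1) : ℝ)) : ℂ)) (Ioc 0 1) := by
    apply h.congr_fun ?_ measurableSet_Ioc
    intro x hx
    show (x:ℂ) ^ ((p:ℂ)-1) * ((1:ℂ)-(x:ℂ)) ^ ((q:ℂ)-1) = _
    rw [show ((1:ℂ) - (x:ℂ)) = ((1 - x : ℝ) : ℂ) by push_cast; ring,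
      cpow_eq_real x hx.1.le, cpow_eq_real (1-x) (by linarith [hx.2])]
    push_cast; ring
  have h3 : IntegrableOn (fun x : ℝ => x ^ (p-1) * (1-x) ^ (q-1)) (Ioc 0 1) :=
    h2.re.congr (Filter.Eventually.of_forall fun x => by simp)
  exact h3.mono_set Ioo_subset_Ioc_self

lemma rBeta_eq_Gamma {p q : ℝ} (hp : 0 < p) (hq : 0 < q) :
    rBeta p q = Real.Gamma p * Real.Gamma q / Real.Gamma (p + q) := by
  have h := Complex.Gamma_mul_Gamma_eq_betaIntegral (s := (p:ℂ)) (t := (q:ℂ))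
    (by simpa) (by simpa)
  have hbeta : Complex.betaIntegral p q = ((rBeta p q : ℝ) : ℂ) := by
    rw [Complex.betaIntegral, rBeta, ← intervalIntegral.integral_ofReal]
    apply intervalIntegral.integral_congr
    intro x hx
    rw [uIcc_of_le zero_le_one] at hx
    show (x:ℂ) ^ ((p:ℂ)-1) * ((1:ℂ)-(x:ℂ)) ^ ((q:ℂ)-1) = _
    rw [show ((1:ℂ) - (x:ℂ)) = ((1 - x : ℝ) : ℂ) by push_cast; ring,
      cpow_eq_real x hx.1, cpow_eq_real (1-x) (by linarith [hx.2])]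
    push_cast; ring
  rw [hbeta, ← Complex.ofReal_add, Complex.Gamma_ofReal, Complex.Gamma_ofReal,
    Complex.Gamma_ofReal] at h
  have hne : Real.Gamma (p + q) ≠ 0 := (Real.Gamma_pos_of_pos (by linarith)).ne'
  rw [eq_div_iff hne, mul_comm (rBeta p q)]
  exact_mod_cast h.symm

lemma rBeta_pos {p q : ℝ} (hp : 0 < p) (hq : 0 < q) : 0 < rBeta p q := by
  rw [rBeta_eq_Gamma hp hq]
  exact div_pos (mul_pos (Real.Gamma_pos_of_pos hp) (Real.Gamma_pos_of_pos hq))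
    (Real.Gamma_pos_of_pos (by linarith))


lemma Gamma_shift {u : ℝ} (hu : 0 < u) (k : ℕ) :
    Real.Gamma (u + k) = Real.Gamma u * ∏ i ∈ Finset.range k, (u + i) := by
  induction k with
  | zero => simp
  | succ k ih =>
    have : u + (k+1 : ℕ) = (u + k) + 1 := by push_cast; ring
    rw [this, Real.Gamma_add_one (by positivity), ih, Finset.prod_range_succ]
    ring

lemma rBeta_ratio {p q : ℝ} (hp : 0 < p) (hq : 0 < q) (k m : ℕ) :
    (∫ x in (0:ℝ)..1, x ^ (p + k - 1) * (1-x) ^ (q + m - 1)) =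
      ((∏ i ∈ Finset.range k, (p + i)) * (∏ i ∈ Finset.range m, (q + i)) /
        ∏ i ∈ Finset.range (k + m), (p + q + i)) *
      ∫ x in (0:ℝ)..1, x ^ (p - 1) * (1-x) ^ (q - 1) := by
  have h1 : (∫ x in (0:ℝ)..1, x ^ (p + k - 1) * (1-x) ^ (q + m - 1)) = rBeta (p+k) (q+m) := rfl
  have h2 : (∫ x in (0:ℝ)..1, x ^ (p - 1) * (1-x) ^ (q - 1)) = rBeta p q := rfl
  rw [h1, h2, rBeta_eq_Gamma (by positivity) (by positivity), rBeta_eq_Gamma hp hq,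
    Gamma_shift hp, Gamma_shift hq,
    show p + ↑k + (q + ↑m) = (p + q) + ((k : ℕ) + (m : ℕ) : ℕ) by push_cast; ring,
    Gamma_shift (by positivity)]
  have g1 : Real.Gamma p ≠ 0 := (Real.Gamma_pos_of_pos hp).ne'
  have g2 : Real.Gamma q ≠ 0 := (Real.Gamma_pos_of_pos hq).ne'
  have g3 : Real.Gamma (p + q) ≠ 0 := (Real.Gamma_pos_of_pos (by positivity)).ne'
  have g4 : ∏ i ∈ Finset.range (k + m), (p + q + i) ≠ 0 := by
    apply Finset.prod_ne_zero_iff.mpr; intro i _; positivity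
  field_simp
section
variable {t h a b : ℝ} (hh : 0 < h) (hht : h < t) (ht : t < 1)
  (ha : a = t / h) (hb : b = (1 - t) / h)

include hh hht ht ha hb in
lemma hB_eq (n k : ℕ) :
    hBernstein n k t h = (n.choose k : ℝ) * rBeta (a + k) (b + (n - k : ℕ)) / rBeta a b := by
  have hne : h ≠ 0 := hh.ne'
  have hab : a + b = 1 / h := by rw [ha, hb]; field_simp; ring
  have ha1 : (1:ℝ) < a := by rw [ha]; rw [lt_div_iff₀ hh]; linarith
  have ha0 : 0 < a := by linarith
  have hb0 : 0 < b := by rw [hb]; exact div_pos (by linarith) hh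
  rcases lt_or_ge n k with hnk | hnk
  · rw [hBernstein, Nat.choose_eq_zero_of_lt hnk]
    simp
  · have e1 : ∏ i ∈ Finset.range k, (t + i * h) = h ^ k * ∏ i ∈ Finset.range k, (a + i) := by
      rw [Finset.pow_eq_prod_const, ← Finset.prod_mul_distrib]
      exact Finset.prod_congr rfl fun i _ => by rw [ha]; field_simp
    have e2 : ∏ i ∈ Finset.range (n - k), (1 - t + i * h) =
        h ^ (n - k) * ∏ i ∈ Finset.range (n - k), (b + i) := by
      rw [Finset.pow_eq_prod_const, ← Finset.prod_mul_distrib]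
      exact Finset.prod_congr rfl fun i _ => by rw [hb]; field_simp
    have e3 : ∏ i ∈ Finset.range n, (1 + i * h) = h ^ n * ∏ i ∈ Finset.range n, (a + b + i) := by
      rw [Finset.pow_eq_prod_const, ← Finset.prod_mul_distrib]
      exact Finset.prod_congr rfl fun i _ => by rw [hab]; field_simp
    have hr := rBeta_ratio ha0 hb0 k (n - k)
    have hkk : k + (n - k) = n := by omega
    rw [hkk] at hr
    have hBpos := rBeta_pos ha0 hb0
    have hprod : ∏ i ∈ Finset.range n, (a + b + i) ≠ 0 := by
      apply Finset.prod_ne_zero_iff.mpr; intro i _; positivity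
    rw [hBernstein, e1, e2, e3, show rBeta (a + ↑k) (b + ↑(n-k)) =
      (∫ x in (0:ℝ)..1, x ^ (a + ↑k - 1) * (1-x) ^ (b + ↑(n-k) - 1)) from rfl, hr,
      show (∫ x in (0:ℝ)..1, x ^ (a - 1) * (1-x) ^ (b - 1)) = rBeta a b from rfl]
    have hpow : h ^ k * h ^ (n - k) = h ^ n := by rw [← pow_add, hkk]
    field_simp
    rw [← hpow]
    ring
end

end Aux

open MeasureTheory Set Real in
/-- For `0 < h < t < 1` with `a = t/h`, `b = (1-t)/h`, and every `k`:
`∑_{n=0}^∞ (-1)^n B_k^n(t;h) = (-1)^k ∫_0^1 x^{a+k-1}(1-x)^{b-1}/((2-x)^{k+1} B(a,b)) dx`. -/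
theorem hBernstein_alternating_sum (t h : ℝ) (hh : 0 < h) (hht : h < t) (ht : t < 1)
    (k : ℕ) (a b : ℝ) (ha : a = t / h) (hb : b = (1 - t) / h) :
    HasSum (fun n : ℕ => (-1 : ℝ) ^ n * hBernstein n k t h)
      ((-1 : ℝ) ^ k *
        ∫ x in (0 : ℝ)..1,
          x ^ (a + k - 1) * (1 - x) ^ (b - 1) /
            ((2 - x) ^ (k + 1) * ∫ y in (0 : ℝ)..1, y ^ (a - 1) * (1 - y) ^ (b - 1))) := by
  have ha1 : (1:ℝ) < a := by rw [ha, lt_div_iff₀ hh]; linarith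
  have ha0 : (0:ℝ) < a := by linarith
  have hb0 : (0:ℝ) < b := by rw [hb]; exact div_pos (by linarith) hh
  set μ := volume.restrict (Ioo (0:ℝ) 1) with hμ
  set F : ℕ → ℝ → ℝ := fun n x =>
    ((-1:ℝ) ^ n * n.choose k) * (x ^ (a + k - 1) * (1-x) ^ (b + (n - k : ℕ) - 1)) with hF
  set c : ℝ := rBeta a b with hc
  have hcpos : 0 < c := rBeta_pos ha0 hb0
  -- interval integral = Ioo integral
  have ioo_eq : ∀ p q : ℝ, (∫ x in Ioo (0:ℝ) 1, x ^ (p-1) * (1-x) ^ (q-1)) = rBeta p q := by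
    intro p q
    rw [rBeta, intervalIntegral.integral_of_le zero_le_one, integral_Ioc_eq_integral_Ioo]
  -- integrability of each F n
  have hFint : ∀ n : ℕ, Integrable (F n) μ := by
    intro n
    exact (rBeta_integrableOn (p := a + k) (q := b + (n - k : ℕ))
      (by positivity) (by positivity)).const_mul _
  -- norm of F n on Ioo
  have hnormF : ∀ n : ℕ, ∀ x ∈ Ioo (0:ℝ) 1, ‖F n x‖ =
      (n.choose k : ℝ) * (x ^ (a + k - 1) * (1-x) ^ (b + (n - k : ℕ) - 1)) := by
    intro n x hx
    have h0x : 0 < x := hx.1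
    have h1x : 0 < 1 - x := by linarith [hx.2]
    rw [hF]
    simp only [Real.norm_eq_abs, abs_mul, abs_pow, abs_neg, abs_one, one_pow, one_mul,
      Nat.abs_cast]
    rw [abs_of_nonneg (Real.rpow_nonneg h0x.le _), abs_of_nonneg (Real.rpow_nonneg h1x.le _)]
  -- pointwise alternating sum
  have pointSum : ∀ x ∈ Ioo (0:ℝ) 1, HasSum (fun n => F n x)
      ((-1:ℝ) ^ k * (x ^ (a + k - 1) * (1-x) ^ (b-1) / (2-x) ^ (k+1))) := by
    intro x hx
    have h0x : 0 < x := hx.1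
    have h1x : 0 < 1 - x := by linarith [hx.2]
    have hr : ‖x - 1‖ < 1 := by rw [Real.norm_eq_abs, abs_lt]; constructor <;> linarith [hx.2]
    have hs := (hasSum_choose_mul_geometric_of_norm_lt_one k hr).mul_left
      (((-1:ℝ) ^ k) * (x ^ (a + k - 1) * (1-x) ^ (b-1)))
    have key : (fun m : ℕ => (((-1:ℝ) ^ k) * (x ^ (a + k - 1) * (1-x) ^ (b-1))) *
        (((m + k).choose k : ℝ) * (x - 1) ^ m)) = fun m => F (m + k) x := by
      funext m
      rw [hF]
      simp only [Nat.add_sub_cancel]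
      rw [show b + (m:ℝ) - 1 = (b - 1) + (m:ℕ) by push_cast; ring,
        Real.rpow_add h1x, Real.rpow_natCast,
        show (x - 1) ^ m = (-1:ℝ) ^ m * (1-x) ^ m by
          rw [show x - 1 = -(1 - x) by ring, neg_pow],
        pow_add]
      ring
    rw [key] at hs
    have hzero : ∀ i ∈ Finset.range k, F i x = 0 := by
      intro i hi
      rw [hF]
      simp [Nat.choose_eq_zero_of_lt (Finset.mem_range.mp hi)]
    have := (hasSum_nat_add_iff (f := fun n => F n x) k).mp hs
    rw [Finset.sum_congr rfl hzero, Finset.sum_const, smul_zero, add_zero] at this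
    convert this using 1
    · rfl
    rw [show (1:ℝ) - (x - 1) = 2 - x by ring]
    field_simp
  -- pointwise sum of norms
  have normSum : ∀ x ∈ Ioo (0:ℝ) 1, HasSum (fun n => ‖F n x‖)
      (x ^ (a - 1 - 1) * (1-x) ^ (b-1)) := by
    intro x hx
    have h0x : 0 < x := hx.1
    have h1x : 0 < 1 - x := by linarith [hx.2]
    have hr : ‖1 - x‖ < 1 := by rw [Real.norm_eq_abs, abs_lt]; constructor <;> linarith [hx.2]
    have hs := (hasSum_choose_mul_geometric_of_norm_lt_one k hr).mul_left
      (x ^ (a + k - 1) * (1-x) ^ (b-1))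
    have key : (fun m : ℕ => (x ^ (a + k - 1) * (1-x) ^ (b-1)) *
        (((m + k).choose k : ℝ) * (1 - x) ^ m)) = fun m => ‖F (m + k) x‖ := by
      funext m
      rw [hnormF (m + k) x hx]
      simp only [Nat.add_sub_cancel]
      rw [show b + (m:ℝ) - 1 = (b - 1) + (m:ℕ) by push_cast; ring,
        Real.rpow_add h1x, Real.rpow_natCast]
      ring
    rw [key] at hs
    have hzero : ∀ i ∈ Finset.range k, ‖F i x‖ = 0 := by
      intro i hi
      rw [hnormF i x hx, Nat.choose_eq_zero_of_lt (Finset.mem_range.mp hi)]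
      simp
    have := (hasSum_nat_add_iff (f := fun n => ‖F n x‖) k).mp hs
    rw [Finset.sum_congr rfl hzero, Finset.sum_const, smul_zero, add_zero] at this
    convert this using 1
    · rfl
    rw [show (1:ℝ) - (1 - x) = x by ring]
    rw [show x ^ (a - 1 - 1) = x ^ (a + k - 1) / x ^ ((k:ℕ) + 1 : ℕ) by
      rw [← Real.rpow_natCast x ((k:ℕ)+1), ← Real.rpow_sub h0x]
      congr 1
      push_cast; ring]
    field_simp
  -- the dominating function is integrable
  have hg0int : Integrable (fun x : ℝ => x ^ (a - 1 - 1) * (1-x) ^ (b-1)) μ :=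
    rBeta_integrableOn (p := a - 1) (q := b) (by linarith) hb0
  -- summability of integrals of norms
  have hsum : Summable (fun n => ∫ x, ‖F n x‖ ∂μ) := by
    apply summable_of_sum_range_le (c := ∫ x, x ^ (a - 1 - 1) * (1-x) ^ (b-1) ∂μ)
    · intro n; exact integral_nonneg fun x => norm_nonneg _
    · intro N
      rw [← integral_finset_sum _ (fun i _ => (hFint i).norm)]
      apply integral_mono_ae (integrable_finset_sum _ (fun i _ => (hFint i).norm)) hg0int
      rw [hμ]
      refine (ae_restrict_iff' measurableSet_Ioo).mpr (Filter.Eventually.of_forall ?_)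
      intro x hx
      exact sum_le_hasSum (Finset.range N) (fun i _ => norm_nonneg _) (normSum x hx)
  -- interchange
  have interchange := MeasureTheory.hasSum_integral_of_summable_integral_norm hFint hsum
  -- identify each integral
  have hterm : ∀ n : ℕ, (∫ x, F n x ∂μ) / c = (-1:ℝ) ^ n * hBernstein n k t h := by
    intro n
    rw [hF]
    simp only
    rw [MeasureTheory.integral_const_mul, hμ, ioo_eq (a + k) (b + (n - k : ℕ)),
      hB_eq hh hht ht ha hb n k]
    rw [← hc]
    field_simp
  -- identify the total integral
  have htsum_eq : (∫ x, (∑' n, F n x) ∂μ) =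
      (-1:ℝ) ^ k * ∫ x, x ^ (a + k - 1) * (1-x) ^ (b-1) / (2-x) ^ (k+1) ∂μ := by
    rw [← MeasureTheory.integral_const_mul]
    apply integral_congr_ae
    rw [hμ]
    refine (ae_restrict_iff' measurableSet_Ioo).mpr (Filter.Eventually.of_forall ?_)
    intro x hx
    exact (pointSum x hx).tsum_eq
  have final := interchange.div_const c
  have hfun : (fun n => (∫ x, F n x ∂μ) / c) = fun n : ℕ => (-1:ℝ) ^ n * hBernstein n k t h :=
    funext hterm
  rw [hfun, htsum_eq] at final
  convert final using 1
  · rfl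
  rw [show (∫ y in (0:ℝ)..1, y ^ (a - 1) * (1 - y) ^ (b - 1)) = c from rfl,
    intervalIntegral.integral_of_le zero_le_one, integral_Ioc_eq_integral_Ioo, ← hμ]
  rw [show (fun x => x ^ (a + k - 1) * (1 - x) ^ (b - 1) / ((2 - x) ^ (k + 1) * c)) =
      (fun x => (x ^ (a + k - 1) * (1 - x) ^ (b - 1) / (2 - x) ^ (k + 1)) / c) from
    funext fun x => by rw [div_div]]
  rw [MeasureTheory.integral_div]
  ring
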